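/- Let A(s) be the Mauldin–Williams matrix of a graph with N vertices and weights r_e ∈ (0,1), and let r_min = min_e r_e. Then each entry of adj(I − A(s)) is an exponential polynomial of the form ε(uv) + Σ_α p_α^s − Σ_β q_β^s where ε(uv) ∈ {0,1} and each p_α, q_β is a product of at most N−1 of the weights r_e; consequently, for Re(s) ≤ c_l < 0, |adj(I − A(s))_{uv}| ≤ C′ r_min^{(N−1) Re(s)} for some constant C′ depending only on the graph and c_l. -/

import Mathlib

open Finset

section Aux
variable {E : Type*}

/-- `f` is representable as `∑ p^s - ∑ q^s` with bases products of at most `k` weights. -/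
def MWRep (r : E → ℝ) (k : ℕ) (f : ℂ → ℂ) : Prop :=
  ∃ (m l : ℕ) (P : Fin m → Multiset E) (Q : Fin l → Multiset E),
    (∀ a, (P a).card ≤ k) ∧ (∀ b, (Q b).card ≤ k) ∧
    ∀ s : ℂ, f s = (∑ a, ((((P a).map r).prod : ℝ) : ℂ) ^ s)
      - ∑ b, ((((Q b).map r).prod : ℝ) : ℂ) ^ s

variable {r : E → ℝ}

lemma mwrep_of (k : ℕ) (f : ℂ → ℂ) (ι κ : Type) [Fintype ι] [Fintype κ]
    (P : ι → Multiset E) (Q : κ → Multiset E)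
    (hP : ∀ a, (P a).card ≤ k) (hQ : ∀ b, (Q b).card ≤ k)
    (h : ∀ s : ℂ, f s = (∑ a, ((((P a).map r).prod : ℝ) : ℂ) ^ s)
      - ∑ b, ((((Q b).map r).prod : ℝ) : ℂ) ^ s) : MWRep r k f := by
  refine ⟨Fintype.card ι, Fintype.card κ, P ∘ (Fintype.equivFin ι).symm,
    Q ∘ (Fintype.equivFin κ).symm, fun a => hP _, fun b => hQ _, fun s => ?_⟩
  rw [h s]
  rw [← Equiv.sum_comp (Fintype.equivFin ι).symm
      (fun a => ((((P a).map r).prod : ℝ) : ℂ) ^ s),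
    ← Equiv.sum_comp (Fintype.equivFin κ).symm
      (fun b => ((((Q b).map r).prod : ℝ) : ℂ) ^ s)]
  rfl

lemma mwrep_zero (k : ℕ) : MWRep r k 0 :=
  mwrep_of k 0 (Fin 0) (Fin 0) Fin.elim0 Fin.elim0 (fun a => a.elim0) (fun b => b.elim0)
    (by simp)

lemma mwrep_one (k : ℕ) : MWRep r k 1 :=
  mwrep_of k 1 (Fin 1) (Fin 0) (fun _ => 0) Fin.elim0 (by simp) (fun b => b.elim0)
    (by simp)

lemma mwrep_mono {k k' : ℕ} (hk : k ≤ k') {f : ℂ → ℂ} (h : MWRep r k f) : MWRep r k' f := by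
  obtain ⟨m, l, P, Q, hP, hQ, hf⟩ := h
  exact ⟨m, l, P, Q, fun a => (hP a).trans hk, fun b => (hQ b).trans hk, hf⟩

lemma mwrep_neg {k : ℕ} {f : ℂ → ℂ} (h : MWRep r k f) : MWRep r k (fun s => -f s) := by
  obtain ⟨m, l, P, Q, hP, hQ, hf⟩ := h
  exact ⟨l, m, Q, P, hQ, hP, fun s => by show -f s = _; rw [hf s]; ring⟩

lemma mwrep_add {k : ℕ} {f g : ℂ → ℂ} (hf : MWRep r k f) (hg : MWRep r k g) :
    MWRep r k (fun s => f s + g s) := by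
  obtain ⟨m, l, P, Q, hP, hQ, hfe⟩ := hf
  obtain ⟨m', l', P', Q', hP', hQ', hge⟩ := hg
  refine mwrep_of k _ (Fin m ⊕ Fin m') (Fin l ⊕ Fin l') (Sum.elim P P') (Sum.elim Q Q')
    (by rintro (a | a) <;> simp [hP, hP']) (by rintro (b | b) <;> simp [hQ, hQ'])
    (fun s => ?_)
  rw [hfe s, hge s, Fintype.sum_sum_type, Fintype.sum_sum_type]
  simp only [Sum.elim_inl, Sum.elim_inr]
  ring

lemma prod_map_pos (hr0 : ∀ e, 0 < r e) (ms : Multiset E) : 0 < ((ms.map r).prod : ℝ) := by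
  induction ms using Multiset.induction_on with
  | empty => simp
  | cons a t ih => rw [Multiset.map_cons, Multiset.prod_cons]; exact mul_pos (hr0 a) ih

lemma cpow_prod_add (hr0 : ∀ e, 0 < r e) (m1 m2 : Multiset E) (s : ℂ) :
    ((((m1 + m2).map r).prod : ℝ) : ℂ) ^ s
      = (((m1.map r).prod : ℝ) : ℂ) ^ s * (((m2.map r).prod : ℝ) : ℂ) ^ s := by
  rw [Multiset.map_add, Multiset.prod_add, Complex.ofReal_mul]
  exact Complex.mul_cpow_ofReal_nonneg (prod_map_pos hr0 m1).le (prod_map_pos hr0 m2).le s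

lemma mwrep_mul (hr0 : ∀ e, 0 < r e) {k k' : ℕ} {f g : ℂ → ℂ}
    (hf : MWRep r k f) (hg : MWRep r k' g) : MWRep r (k + k') (fun s => f s * g s) := by
  obtain ⟨m, l, P, Q, hP, hQ, hfe⟩ := hf
  obtain ⟨m', l', P', Q', hP', hQ', hge⟩ := hg
  refine mwrep_of (k + k') _ ((Fin m × Fin m') ⊕ (Fin l × Fin l'))
    ((Fin m × Fin l') ⊕ (Fin l × Fin m'))
    (Sum.elim (fun x => P x.1 + P' x.2) (fun x => Q x.1 + Q' x.2))
    (Sum.elim (fun x => P x.1 + Q' x.2) (fun x => Q x.1 + P' x.2))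
    ?_ ?_ (fun s => ?_)
  · rintro (x | x) <;> simp only [Sum.elim_inl, Sum.elim_inr, Multiset.card_add] <;>
      exact add_le_add (by first | exact hP _ | exact hQ _) (by first | exact hP' _ | exact hQ' _)
  · rintro (x | x) <;> simp only [Sum.elim_inl, Sum.elim_inr, Multiset.card_add] <;>
      exact add_le_add (by first | exact hP _ | exact hQ _) (by first | exact hP' _ | exact hQ' _)
  · rw [hfe s, hge s, Fintype.sum_sum_type, Fintype.sum_sum_type]
    simp only [Sum.elim_inl, Sum.elim_inr, Fintype.sum_prod_type, cpow_prod_add hr0]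
    rw [← Finset.sum_mul_sum, ← Finset.sum_mul_sum, ← Finset.sum_mul_sum, ← Finset.sum_mul_sum]
    ring

lemma mwrep_sum (hr0 : ∀ e, 0 < r e) {ι : Type*} (t : Finset ι) (k : ℕ) (g : ι → ℂ → ℂ)
    (h : ∀ i ∈ t, MWRep r k (g i)) : MWRep r k (fun s => ∑ i ∈ t, g i s) := by
  classical
  induction t using Finset.cons_induction with
  | empty => simp only [Finset.sum_empty]; exact mwrep_zero k
  | cons a t ha ih =>
    simp only [Finset.sum_cons]
    exact mwrep_add (h a (Finset.mem_cons_self a t))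
      (ih fun i hi => h i (Finset.mem_cons_of_mem hi))

lemma mwrep_prod (hr0 : ∀ e, 0 < r e) {ι : Type*} (t : Finset ι) (k : ι → ℕ) (g : ι → ℂ → ℂ)
    (h : ∀ i ∈ t, MWRep r (k i) (g i)) :
    MWRep r (∑ i ∈ t, k i) (fun s => ∏ i ∈ t, g i s) := by
  classical
  induction t using Finset.cons_induction with
  | empty => simp only [Finset.prod_empty, Finset.sum_empty]; exact mwrep_one 0
  | cons a t ha ih =>
    simp only [Finset.prod_cons, Finset.sum_cons]
    exact mwrep_mul hr0 (h a (Finset.mem_cons_self a t))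
      (ih fun i hi => h i (Finset.mem_cons_of_mem hi))

lemma mwrep_sign {k : ℕ} {f : ℂ → ℂ} (z : ℤˣ) (h : MWRep r k f) :
    MWRep r k (fun s => ((z : ℤ) : ℂ) * f s) := by
  rcases Int.units_eq_one_or z with hz | hz <;> rw [hz]
  · simpa using h
  · push_cast
    simpa [neg_one_mul] using mwrep_neg h

end Aux

section Aux
variable {E : Type*} {r : E → ℝ}

lemma mwrep_congr {k : ℕ} {f g : ℂ → ℂ} (h : ∀ s, f s = g s)
    (hg : MWRep r k g) : MWRep r k f := by
  obtain ⟨m, l, P, Q, hP, hQ, hge⟩ := hg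
  exact ⟨m, l, P, Q, hP, hQ, fun s => (h s).trans (hge s)⟩

end Aux

theorem adjugate_MW_exponential_polynomial
    {V : Type*} [Fintype V] [DecidableEq V] [Nonempty V] {E : Type*} [Fintype E]
    [Nonempty E]
    (src tgt : E → V) (r : E → ℝ) (hr : ∀ e, 0 < r e ∧ r e < 1)
    (A : ℂ → Matrix V V ℂ)
    (hA : ∀ s u v, A s u v =
      ∑ e ∈ univ.filter (fun e => src e = u ∧ tgt e = v), (r e : ℂ) ^ s)
    (rmin : ℝ) (hrmin : IsLeast (Set.range r) rmin) (u v : V) :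
    (∃ c : ℂ, (c = 0 ∨ c = 1) ∧ ∃ (m l : ℕ) (p : Fin m → ℝ) (q : Fin l → ℝ),
      (∀ α, ∃ ms : Multiset E, ms.card ≤ Fintype.card V - 1 ∧ p α = (ms.map r).prod) ∧
      (∀ β, ∃ ms : Multiset E, ms.card ≤ Fintype.card V - 1 ∧ q β = (ms.map r).prod) ∧
      (∀ s : ℂ, Matrix.adjugate (1 - A s) u v =
        c + (∑ α, (p α : ℂ) ^ s) - ∑ β, (q β : ℂ) ^ s)) ∧
    (∀ c_l : ℝ, c_l < 0 → ∃ C' : ℝ, 0 < C' ∧ ∀ s : ℂ, s.re ≤ c_l →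
      ‖Matrix.adjugate (1 - A s) u v‖ ≤
        C' * rmin ^ (((Fintype.card V : ℝ) - 1) * s.re)) := by
  classical
  have hr0 : ∀ e, 0 < r e := fun e => (hr e).1
  -- each entry of `1 - A s` is representable with degree ≤ 1
  have hentry : ∀ u' v' : V, MWRep r 1 (fun s => (1 - A s) u' v') := by
    intro u' v'
    have hsum : MWRep r 1
        (fun s => ∑ e ∈ univ.filter (fun e => src e = u' ∧ tgt e = v'), (r e : ℂ) ^ s) := by
      refine mwrep_sum hr0 _ 1 (fun e s => (r e : ℂ) ^ s) (fun e _ => ?_)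
      exact mwrep_of 1 _ (Fin 1) (Fin 0) (fun _ => {e}) Fin.elim0 (by simp)
        (fun b => b.elim0) (by simp)
    have hconst : MWRep r 1 (fun _ : ℂ => (if u' = v' then (1:ℂ) else 0)) := by
      by_cases h : u' = v' <;> simp only [h, if_true, if_false]
      · exact mwrep_one 1
      · exact mwrep_zero 1
    refine mwrep_congr (g := fun s => (if u' = v' then (1:ℂ) else 0) +
      -(∑ e ∈ univ.filter (fun e => src e = u' ∧ tgt e = v'), (r e : ℂ) ^ s)) ?_
      (mwrep_add hconst (mwrep_neg hsum))
    intro s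
    rw [Matrix.sub_apply, Matrix.one_apply, hA]
    ring
  -- the adjugate entry is representable with degree ≤ N - 1
  have key : MWRep r (Fintype.card V - 1) (fun s => Matrix.adjugate (1 - A s) u v) := by
    have hdet : ∀ s : ℂ, Matrix.adjugate (1 - A s) u v =
        ∑ σ : Equiv.Perm V, ((Equiv.Perm.sign σ : ℤ) : ℂ) *
          ∏ i, ((1 - A s).updateRow v (Pi.single u 1)) (σ i) i := fun s => by
      rw [Matrix.adjugate_apply, Matrix.det_apply']
    refine mwrep_congr hdet (mwrep_sum hr0 univ _ _ (fun σ _ => ?_))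
    refine mwrep_sign (Equiv.Perm.sign σ) ?_
    have hcount : ∑ i : V, (if σ i = v then (0:ℕ) else 1) ≤ Fintype.card V - 1 := by
      have h0 : (if σ (σ.symm v) = v then (0:ℕ) else 1) = 0 := by simp
      calc ∑ i : V, (if σ i = v then (0:ℕ) else 1)
          = ∑ i ∈ univ.erase (σ.symm v), (if σ i = v then (0:ℕ) else 1) :=
            (Finset.sum_erase (f := fun i => if σ i = v then (0:ℕ) else 1) univ h0).symm
        _ ≤ ∑ _i ∈ univ.erase (σ.symm v), 1 :=
            Finset.sum_le_sum (fun i _ => by split <;> omega)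
        _ = (univ.erase (σ.symm v)).card := by simp
        _ = Fintype.card V - 1 := by
            rw [Finset.card_erase_of_mem (mem_univ _), Finset.card_univ]
    refine mwrep_mono hcount (mwrep_prod hr0 univ _
      (fun i s => ((1 - A s).updateRow v (Pi.single u 1)) (σ i) i) (fun i _ => ?_))
    by_cases hv : σ i = v
    · simp only [hv, if_true]
      refine mwrep_congr (g := fun _ : ℂ => (if i = u then (1:ℂ) else 0)) ?_ ?_
      · intro s; simp [Matrix.updateRow_self, Pi.single_apply]
      · by_cases h : i = u <;> simp only [h, if_true, if_false]
        · exact mwrep_one 0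
        · exact mwrep_zero 0
    · simp only [hv, if_false]
      exact mwrep_congr (fun s => by rw [Matrix.updateRow_ne hv]) (hentry (σ i) i)
  obtain ⟨m, l, P, Q, hP, hQ, hrep⟩ := key
  beta_reduce at hrep
  -- facts about rmin
  obtain ⟨⟨e0, he0⟩, hlb⟩ := hrmin
  have hrminpos : 0 < rmin := he0 ▸ hr0 e0
  have hrmin1 : rmin < 1 := he0 ▸ (hr e0).2
  have hle : ∀ e, rmin ≤ r e := fun e => hlb ⟨e, rfl⟩
  have hms : ∀ ms : Multiset E, rmin ^ (Multiset.card ms) ≤ ((ms.map r).prod : ℝ) := by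
    intro ms
    induction ms using Multiset.induction_on with
    | empty => simp
    | cons a t ih =>
        rw [Multiset.map_cons, Multiset.prod_cons, Multiset.card_cons, pow_succ']
        exact mul_le_mul (hle a) ih (pow_nonneg hrminpos.le _) (hr0 a).le
  constructor
  · exact ⟨0, Or.inl rfl, m, l, fun a => ((P a).map r).prod, fun b => ((Q b).map r).prod,
      fun a => ⟨P a, hP a, rfl⟩, fun b => ⟨Q b, hQ b, rfl⟩,
      fun s => by rw [hrep s, zero_add]⟩
  · intro c_l hcl
    refine ⟨(m : ℝ) + l + 1, by positivity, fun s hs => ?_⟩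
    have hsre : s.re ≤ 0 := hs.trans hcl.le
    have hbase : ∀ ms : Multiset E, Multiset.card ms ≤ Fintype.card V - 1 →
        ((ms.map r).prod : ℝ) ^ s.re ≤ rmin ^ (((Fintype.card V : ℝ) - 1) * s.re) := by
      intro ms hcard
      have h1 : rmin ^ (Fintype.card V - 1) ≤ rmin ^ (Multiset.card ms) :=
        pow_le_pow_of_le_one hrminpos.le hrmin1.le hcard
      have h2 : (0:ℝ) < rmin ^ (Fintype.card V - 1) := pow_pos hrminpos _
      have h3 : ((ms.map r).prod : ℝ) ^ s.re ≤ (rmin ^ (Fintype.card V - 1)) ^ s.re :=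
        Real.rpow_le_rpow_of_nonpos h2 (h1.trans (hms ms)) hsre
      have h4 : ((Fintype.card V - 1 : ℕ) : ℝ) = (Fintype.card V : ℝ) - 1 := by
        have : 1 ≤ Fintype.card V := Fintype.card_pos
        push_cast [this]; ring
      calc ((ms.map r).prod : ℝ) ^ s.re ≤ (rmin ^ (Fintype.card V - 1)) ^ s.re := h3
        _ = rmin ^ (((Fintype.card V : ℝ) - 1) * s.re) := by
            rw [← Real.rpow_natCast rmin (Fintype.card V - 1),
              ← Real.rpow_mul hrminpos.le, h4]
    set R : ℝ := rmin ^ (((Fintype.card V : ℝ) - 1) * s.re) with hR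
    have hRpos : 0 < R := Real.rpow_pos_of_pos hrminpos _
    rw [hrep s]
    have habs : ∀ (n : ℕ) (T : Fin n → Multiset E), (∀ a, (T a).card ≤ Fintype.card V - 1) →
        ‖∑ a, ((((T a).map r).prod : ℝ) : ℂ) ^ s‖ ≤ (n : ℝ) * R := by
      intro n T hT
      calc ‖∑ a, ((((T a).map r).prod : ℝ) : ℂ) ^ s‖
          ≤ ∑ a, ‖((((T a).map r).prod : ℝ) : ℂ) ^ s‖ :=
            norm_sum_le _ _
        _ ≤ ∑ _a : Fin n, R := by
            refine Finset.sum_le_sum (fun a _ => ?_)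
            rw [Complex.norm_cpow_eq_rpow_re_of_pos (prod_map_pos hr0 (T a))]
            exact hbase (T a) (hT a)
        _ = (n : ℝ) * R := by rw [Finset.sum_const, Finset.card_univ, Fintype.card_fin,
            nsmul_eq_mul]
    calc ‖(∑ a, ((((P a).map r).prod : ℝ) : ℂ) ^ s)
          - ∑ b, ((((Q b).map r).prod : ℝ) : ℂ) ^ s‖
        ≤ ‖∑ a, ((((P a).map r).prod : ℝ) : ℂ) ^ s‖
          + ‖∑ b, ((((Q b).map r).prod : ℝ) : ℂ) ^ s‖ := by
          simpa using norm_sub_le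
            (∑ a, ((((P a).map r).prod : ℝ) : ℂ) ^ s)
            (∑ b, ((((Q b).map r).prod : ℝ) : ℂ) ^ s)
      _ ≤ (m : ℝ) * R + (l : ℝ) * R := add_le_add (habs m P hP) (habs l Q hQ)
      _ ≤ ((m : ℝ) + l + 1) * R := by nlinarith
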